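/- arXiv:2001.02220 — 5 statements merged into one kernel-verified Lean document; each statement's English description precedes it below -/
import Mathlib

section
/- Let p and q be distinct odd primes with p, q ≡ 3 (mod 8), and let x be a primitive root modulo p. Then -1 does not lie in the cyclic subgroup of the units of Z/(pq)Z generated by x^2 (where x is viewed modulo pq, assuming x is a unit mod pq). -/
theorem neg_one_not_in_square_powers (p q : ℕ) (hp : p.Prime) (hq : q.Prime)
    (hne : p ≠ q) (hp8 : p % 8 = 3) (hq8 : q % 8 = 3) (x : ℕ)
    (hcop : Nat.Coprime x (p * q))
    (hroot : ∀ y : ZMod p, y ≠ 0 → ∃ n : ℕ, (x : ZMod p) ^ n = y) :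
    ¬∃ n : ℕ, ((x : ZMod (p * q)) ^ 2) ^ n = -1 := by
  haveI : Fact p.Prime := ⟨hp⟩
  rintro ⟨n, hn⟩
  have hcp : Nat.Coprime x p := Nat.Coprime.coprime_dvd_right ⟨q, rfl⟩ hcop
  set u : (ZMod p)ˣ := ZMod.unitOfCoprime x hcp with hu
  have huc : (u : ZMod p) = (x : ZMod p) := rfl
  -- cast the equation down to ZMod p
  have hpd : p ∣ p * q := ⟨q, rfl⟩
  have hcast : ((x : ZMod p) ^ 2) ^ n = -1 := by
    have := congrArg (ZMod.castHom hpd (ZMod p)) hn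
    rw [map_pow, map_pow, map_natCast, map_neg, map_one] at this
    exact this
  -- order of u is p - 1
  have hgen : ∀ y : (ZMod p)ˣ, y ∈ Subgroup.zpowers u := by
    intro y
    obtain ⟨m, hm⟩ := hroot (y : ZMod p) (Units.ne_zero y)
    refine ⟨m, ?_⟩
    ext
    simpa [huc] using hm
  have hord : orderOf u = p - 1 := by
    have := orderOf_eq_card_of_forall_mem_zpowers hgen
    rwa [Nat.card_eq_fintype_card, ZMod.card_units] at this
  -- u ^ (2*n) = -1
  have hun : u ^ (2 * n) = -1 := by
    ext
    push_cast [huc]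
    rw [pow_mul]
    simpa using hcast
  haveI : Fact (2 < p) := ⟨by omega⟩
  have hne1 : (-1 : (ZMod p)ˣ) ≠ 1 := by
    intro h
    have h' : (-1 : ZMod p) = 1 := by
      have := congrArg Units.val h
      simpa using this
    exact ZMod.neg_one_ne_one h'
  have hndvd : ¬ (p - 1) ∣ 2 * n := by
    rw [← hord]
    intro h
    have h1 := orderOf_dvd_iff_pow_eq_one.mp h
    exact hne1 (hun.symm.trans h1)
  have hdvd4 : (p - 1) ∣ 4 * n := by
    rw [← hord]
    apply orderOf_dvd_of_pow_eq_one
    have : u ^ (4 * n) = (u ^ (2 * n)) ^ 2 := by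
      rw [← pow_mul]; congr 1; ring
    rw [this, hun]
    simp
  -- arithmetic contradiction: p ≡ 3 mod 4
  obtain ⟨k, hk⟩ : ∃ k, p = 4 * k + 3 := ⟨p / 8 * 2, by omega⟩
  have h1 : (4 * k + 2) ∣ 4 * n := by rw [hk] at hdvd4; simpa using hdvd4
  have h2 : ¬ (4 * k + 2) ∣ 2 * n := by rw [hk] at hndvd; simpa using hndvd
  have h3 : (2 * k + 1) ∣ 2 * n := by
    obtain ⟨c, hc⟩ := h1
    refine ⟨c, Nat.eq_of_mul_eq_mul_left (by norm_num : 0 < 2) ?_⟩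
    rw [show 2 * (2 * n) = 4 * n by ring, hc]; ring
  have h4 : (2 * k + 1) ∣ n := by
    have hco : Nat.Coprime (2 * k + 1) 2 := Odd.coprime_two_right ⟨k, by ring⟩
    exact (Nat.Coprime.dvd_of_dvd_mul_left hco) h3
  exact h2 (by obtain ⟨c, hc⟩ := h4; exact ⟨c, by rw [hc]; ring⟩)
end

section
/- Let p and q be distinct odd primes with p, q ≡ 3 (mod 8), and let x be an integer that is a primitive root modulo p and coprime to pq. Then 2 does not lie in the cyclic subgroup of the units of Z/(pq)Z generated by x^2. -/
theorem two_not_in_square_powers (p q : ℕ) (hp : p.Prime) (hq : q.Prime)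
    (hne : p ≠ q) (hp8 : p % 8 = 3) (hq8 : q % 8 = 3) (x : ℕ)
    (hcop : Nat.Coprime x (p * q))
    (hroot : ∀ y : ZMod p, y ≠ 0 → ∃ n : ℕ, (x : ZMod p) ^ n = y) :
    ¬∃ n : ℕ, ((x : ZMod (p * q)) ^ 2) ^ n = 2 := by
  rintro ⟨n, hn⟩
  haveI : Fact p.Prime := ⟨hp⟩
  have hp2 : p ≠ 2 := by omega
  have hsq : IsSquare (2 : ZMod p) := by
    have := congrArg (ZMod.castHom (dvd_mul_right p q) (ZMod p)) hn
    simp only [map_pow, map_natCast, map_ofNat] at this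
    exact ⟨(x : ZMod p) ^ n, by rw [← this]; ring⟩
  rw [ZMod.exists_sq_eq_two_iff hp2] at hsq
  omega
end

section
/- Let p ≡ 3 (mod 4) be an odd prime with p ≠ 3, and let β be a non-quadratic residue modulo p with β ≠ -1. Then the set S_β = { {x, βx} : x ∈ QR(p) } is a strong starter for Z/pZ; that is: (1) the elements x and βx for x ∈ QR(p) are pairwise distinct and together give all nonzero residues; (2) the differences ±(βx - x) for x ∈ QR(p) give all nonzero residues; (3) the sums x + βx for x ∈ QR(p) are nonzero and pairwise distinct. -/
/-- The set of quadratic residues modulo `p`: nonzero squares in `ZMod p`. -/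
def QRset (p : ℕ) : Set (ZMod p) := {x | x ≠ 0 ∧ ∃ y : ZMod p, y ≠ 0 ∧ y ^ 2 = x}

lemma mem_QRset {p : ℕ} [Fact p.Prime] (a : ZMod p) :
    a ∈ QRset p ↔ a ≠ 0 ∧ IsSquare a := by
  constructor
  · rintro ⟨h0, y, hy, rfl⟩
    exact ⟨h0, y, (sq y).symm ▸ rfl⟩
  · rintro ⟨h0, y, rfl⟩
    refine ⟨h0, y, ?_, sq y⟩
    rintro rfl; simp at h0

theorem S_beta_strong_starter (p : ℕ) (hp : p.Prime) (hp4 : p % 4 = 3) (hp3 : p ≠ 3)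
    (β : ZMod p) (hβ0 : β ≠ 0) (hβnqr : ¬∃ y : ZMod p, y ≠ 0 ∧ y ^ 2 = β)
    (hβ1 : β ≠ -1) :
    (QRset p ∩ ((fun x => β * x) '' QRset p) = ∅ ∧
     QRset p ∪ ((fun x => β * x) '' QRset p) = {z : ZMod p | z ≠ 0}) ∧
    (((fun x => β * x - x) '' QRset p) ∩ ((fun x => -(β * x - x)) '' QRset p) = ∅ ∧
     ((fun x => β * x - x) '' QRset p) ∪ ((fun x => -(β * x - x)) '' QRset p)
        = {z : ZMod p | z ≠ 0}) ∧
    ((∀ x ∈ QRset p, x + β * x ≠ 0) ∧ Set.InjOn (fun x => x + β * x) (QRset p)) := by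
  haveI : Fact p.Prime := ⟨hp⟩
  haveI : DecidableEq (ZMod p) := inferInstance
  set χ := quadraticChar (ZMod p) with hχ
  have hβns : ¬ IsSquare β := by
    rintro ⟨y, rfl⟩
    exact hβnqr ⟨y, fun h => by simp [h] at hβ0, sq y⟩
  have hχβ : χ β = -1 := (quadraticChar_neg_one_iff_not_isSquare).mpr hβns
  have hχ1 : ∀ a : ZMod p, a ≠ 0 → (χ a = 1 ↔ IsSquare a) := fun a ha =>
    quadraticChar_one_iff_isSquare ha
  have hχne : ∀ a : ZMod p, a ≠ 0 → (χ a = -1 ↔ ¬ IsSquare a) := fun a ha => by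
    rw [quadraticChar_neg_one_iff_not_isSquare]
  have hχm1 : χ (-1) = -1 := by
    rw [quadraticChar_neg_one_iff_not_isSquare, ZMod.exists_sq_eq_neg_one_iff]
    simp [hp4]
  have hmem : ∀ a : ZMod p, a ∈ QRset p ↔ a ≠ 0 ∧ χ a = 1 := by
    intro a
    rw [mem_QRset]
    constructor
    · rintro ⟨h0, hs⟩; exact ⟨h0, (hχ1 a h0).mpr hs⟩
    · rintro ⟨h0, hs⟩; exact ⟨h0, (hχ1 a h0).mp hs⟩
  have hβ1' : β ≠ 1 := by
    rintro rfl; exact hβns ⟨1, by ring⟩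
  have hγ : β - 1 ≠ 0 := sub_ne_zero.mpr hβ1'
  have hδ : 1 + β ≠ 0 := fun h => hβ1 (by linear_combination h)
  refine ⟨⟨?_, ?_⟩, ⟨?_, ?_⟩, ?_, ?_⟩
  · -- (1a)
    ext z
    simp only [Set.mem_inter_iff, Set.mem_image, Set.mem_empty_iff_false, iff_false]
    rintro ⟨hz, x, hx, rfl⟩
    rw [hmem] at hz hx
    have : χ (β * x) = -1 := by rw [map_mul, hχβ, hx.2]; ring
    rw [this] at hz; exact absurd hz.2 (by norm_num)
  · -- (1b)
    ext z
    simp only [Set.mem_union, Set.mem_image, Set.mem_setOf_eq]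
    constructor
    · rintro (hz | ⟨x, hx, rfl⟩)
      · exact ((hmem z).mp hz).1
      · exact mul_ne_zero hβ0 ((hmem x).mp hx).1
    · intro hz
      rcases quadraticChar_dichotomy hz with h1 | h1
      · exact Or.inl ((hmem z).mpr ⟨hz, h1⟩)
      · refine Or.inr ⟨β⁻¹ * z, (hmem _).mpr ⟨mul_ne_zero (inv_ne_zero hβ0) hz, ?_⟩, ?_⟩
        · have hβinv : χ β⁻¹ = -1 := by
            have := map_mul χ β β⁻¹
            rw [mul_inv_cancel₀ hβ0, map_one, hχβ] at this
            linarith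
          rw [map_mul, hβinv, h1]; ring
        · field_simp
  · -- (2a)
    ext z
    simp only [Set.mem_inter_iff, Set.mem_image, Set.mem_empty_iff_false, iff_false]
    rintro ⟨⟨x, hx, hxe⟩, ⟨y, hy, hye⟩⟩
    rw [hmem] at hx hy
    have hxy : (β - 1) * x = -((β - 1) * y) := by
      rw [show (β-1)*x = β*x - x by ring, hxe, ← hye]; ring
    have : x = -y := by
      field_simp at hxy
      rcases mul_eq_mul_left_iff.mp (by linear_combination (β-1)*hxy : (β-1)*x = (β-1)*(-y)) with h | h
      · exact h
      · exact absurd h hγ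
    have : χ x = -1 := by rw [this, show (-y : ZMod p) = -1 * y by ring, map_mul, hχm1, hy.2]; ring
    rw [hx.2] at this; norm_num at this
  · -- (2b)
    ext z
    simp only [Set.mem_union, Set.mem_image, Set.mem_setOf_eq]
    constructor
    · rintro (⟨x, hx, rfl⟩ | ⟨x, hx, rfl⟩)
      · have := ((hmem x).mp hx).1
        simpa [show β*x - x = (β-1)*x by ring] using mul_ne_zero hγ this
      · have := ((hmem x).mp hx).1
        simp only [neg_ne_zero]
        simpa [show β*x - x = (β-1)*x by ring] using mul_ne_zero hγ this
    · intro hz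
      set w := (β - 1)⁻¹ * z with hw
      have hw0 : w ≠ 0 := mul_ne_zero (inv_ne_zero hγ) hz
      have hzw : (β - 1) * w = z := by rw [hw]; field_simp
      rcases quadraticChar_dichotomy hw0 with h1 | h1
      · exact Or.inl ⟨w, (hmem w).mpr ⟨hw0, h1⟩, by rw [show β*w - w = (β-1)*w by ring, hzw]⟩
      · refine Or.inr ⟨-w, (hmem (-w)).mpr ⟨neg_ne_zero.mpr hw0, ?_⟩, ?_⟩
        · rw [show (-w : ZMod p) = -1 * w by ring, map_mul, hχm1, h1]; ring
        · rw [show β*(-w) - (-w) = -((β-1)*w) by ring, hzw]; ring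
  · -- (3) nonzero
    intro x hx
    have hx0 := ((hmem x).mp hx).1
    rw [show x + β*x = (1+β)*x by ring]
    exact mul_ne_zero hδ hx0
  · -- (3) injective
    intro x hx y hy hxy
    simp only at hxy
    have : (1+β)*x = (1+β)*y := by linear_combination hxy
    exact mul_left_cancel₀ hδ this
end

section
/- Let p ≡ 3 (mod 8) be an odd prime. Then the strong starter S_{1/2} = { {x, 2^{-1}x} : x ∈ QR(p) } for Z/pZ is a Skolem starter. -/
/-- The "gap" of the pair `{z, c*z}`: the difference between the natural
representatives (in `{0,…,p-1}`) of its larger and smaller element. -/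
def pairGap (p : ℕ) (c z : ZMod p) : ℕ :=
  max z.val (c * z).val - min z.val (c * z).val

/-- The strong starter `S_{1/2} = {{x, 2⁻¹x} : x ∈ QR(p)}` is Skolem: for each
`d ∈ {1,…,(p-1)/2}` there is exactly one pair whose larger element minus its
smaller element (as residues in `{1,…,p-1}`) equals `d`. -/
theorem S_half_skolem (p : ℕ) (hp : p.Prime) (hp8 : p % 8 = 3) :
    ∀ d : ℕ, 1 ≤ d → d ≤ (p - 1) / 2 →
      ∃! x : ZMod p, x ∈ QRset p ∧ pairGap p (2 : ZMod p)⁻¹ x = d := by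
  intro d hd1 hd2
  haveI : Fact p.Prime := ⟨hp⟩
  have hp2 : p % 2 = 1 := by omega
  have hp3 : 3 ≤ p := by omega
  have hdp : 2 * d < p := by omega
  set D : ZMod p := ((d : ℕ) : ZMod p) with hDdef
  have hvalD : D.val = d := ZMod.val_cast_of_lt (by omega)
  have hD0 : D ≠ 0 := by
    intro h; rw [h, ZMod.val_zero] at hvalD; omega
  have h2 : (2 : ZMod p) ≠ 0 := by
    have : ((2 : ℕ) : ZMod p).val = 2 := ZMod.val_cast_of_lt (by omega)
    intro h; push_cast at this; rw [h, ZMod.val_zero] at this; omega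
  have h2D0 : (2 : ZMod p) * D ≠ 0 := mul_ne_zero h2 hD0
  -- half identity: for any x, x - 2⁻¹ x = 2⁻¹ x
  have hhalf : ∀ x : ZMod p, (2 : ZMod p)⁻¹ * x + (2 : ZMod p)⁻¹ * x = x := by
    intro x
    field_simp
    ring
  -- quadratic character facts
  have hsq2 : ¬ IsSquare (2 : ZMod p) := by
    rw [ZMod.exists_sq_eq_two_iff (by omega)]; omega
  have hsqneg1 : ¬ IsSquare (-1 : ZMod p) := by
    rw [ZMod.exists_sq_eq_neg_one_iff]; omega
  have hχ2 : quadraticChar (ZMod p) 2 = -1 :=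
    quadraticChar_neg_one_iff_not_isSquare.mpr hsq2
  have hχn1 : quadraticChar (ZMod p) (-1) = -1 :=
    quadraticChar_neg_one_iff_not_isSquare.mpr hsqneg1
  have hsq2D : IsSquare ((2 : ZMod p) * D) ↔ ¬ IsSquare D := by
    rw [← quadraticChar_one_iff_isSquare h2D0, map_mul, hχ2,
      ← quadraticChar_neg_one_iff_not_isSquare]
    constructor
    · intro h
      rcases quadraticChar_dichotomy (F := ZMod p) hD0 with h1 | h1
      · rw [h1] at h; norm_num at h
      · exact h1
    · intro h; rw [h]; ring
  have hsqn2D : IsSquare (-((2 : ZMod p) * D)) ↔ IsSquare D := by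
    rw [show -((2 : ZMod p) * D) = (-1) * (2 * D) by ring,
      ← quadraticChar_one_iff_isSquare (by simpa using h2D0),
      map_mul, map_mul, hχn1, hχ2, ← quadraticChar_one_iff_isSquare hD0]
    constructor
    · intro h; linarith
    · intro h; rw [h]; ring
  have hQR : ∀ x : ZMod p, x ∈ QRset p ↔ x ≠ 0 ∧ IsSquare x := by
    intro x
    constructor
    · rintro ⟨hx, y, hy, rfl⟩
      exact ⟨hx, y, (pow_two y).symm ▸ rfl⟩
    · rintro ⟨hx, y, rfl⟩
      refine ⟨hx, y, fun h => hx (by simp [h]), by rw [pow_two]⟩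
  -- val computations
  have hval2D : ((2 : ZMod p) * D).val = 2 * d := by
    have : ((2 * d : ℕ) : ZMod p) = (2 : ZMod p) * D := by push_cast; ring
    rw [← this, ZMod.val_cast_of_lt hdp]
  have hvalnD : (-D).val = p - d := by
    rw [ZMod.neg_val, if_neg hD0, hvalD]
  have hvaln2D : (-((2 : ZMod p) * D)).val = p - 2 * d := by
    rw [ZMod.neg_val, if_neg h2D0, hval2D]
  have hinv2D : (2 : ZMod p)⁻¹ * ((2 : ZMod p) * D) = D := by
    rw [inv_mul_cancel_left₀ h2]
  have hinvn2D : (2 : ZMod p)⁻¹ * (-((2 : ZMod p) * D)) = -D := by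
    rw [mul_neg, hinv2D]
  -- gap computations
  have hgap2D : pairGap p (2 : ZMod p)⁻¹ ((2 : ZMod p) * D) = d := by
    unfold pairGap
    rw [hinv2D, hval2D, hvalD]
    omega
  have hgapn2D : pairGap p (2 : ZMod p)⁻¹ (-((2 : ZMod p) * D)) = d := by
    unfold pairGap
    rw [hinvn2D, hvaln2D, hvalnD]
    omega
  -- uniqueness helper: any y satisfying the property is 2D or -(2D)
  have huniq : ∀ y : ZMod p, pairGap p (2 : ZMod p)⁻¹ y = d →
      y = (2 : ZMod p) * D ∨ y = -((2 : ZMod p) * D) := by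
    intro y hy
    unfold pairGap at hy
    set a := y.val with ha
    set b := ((2 : ZMod p)⁻¹ * y).val with hb
    have hya : ((a : ℕ) : ZMod p) = y := by rw [ha, ZMod.natCast_val, ZMod.cast_id]
    have hyb : ((b : ℕ) : ZMod p) = (2 : ZMod p)⁻¹ * y := by
      rw [hb, ZMod.natCast_val, ZMod.cast_id]
    rcases le_total b a with hab | hab
    · left
      have hab' : a = b + d := by omega
      have heq : y = (2 : ZMod p)⁻¹ * y + D := by
        have hcast : ((a : ℕ) : ZMod p) = ((b + d : ℕ) : ZMod p) := by rw [hab']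
        push_cast at hcast
        rw [hya, hyb] at hcast
        exact hcast
      have h2y : (2 : ZMod p)⁻¹ * y = D :=
        add_left_cancel ((hhalf y).trans heq)
      calc y = ((2:ZMod p)⁻¹ * y) + ((2:ZMod p)⁻¹ * y) := (hhalf y).symm
        _ = (2 : ZMod p) * D := by rw [h2y]; ring
    · right
      have hab' : b = a + d := by omega
      have heq : (2 : ZMod p)⁻¹ * y = y + D := by
        have hcast : ((b : ℕ) : ZMod p) = ((a + d : ℕ) : ZMod p) := by rw [hab']
        push_cast at hcast
        rw [hya, hyb] at hcast
        exact hcast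
      have h' : (2 : ZMod p)⁻¹ * y + 0 = (2:ZMod p)⁻¹ * y + ((2:ZMod p)⁻¹ * y + D) := by
        rw [add_zero, ← add_assoc, hhalf y]
        exact heq
      have h2y : (2 : ZMod p)⁻¹ * y = -D :=
        eq_neg_of_add_eq_zero_left (add_left_cancel h').symm
      calc y = ((2:ZMod p)⁻¹ * y) + ((2:ZMod p)⁻¹ * y) := (hhalf y).symm
        _ = -((2 : ZMod p) * D) := by rw [h2y]; ring
  by_cases hD : IsSquare D
  · refine ⟨-((2 : ZMod p) * D), ⟨(hQR _).mpr ⟨neg_ne_zero.mpr h2D0, hsqn2D.mpr hD⟩, hgapn2D⟩, ?_⟩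
    rintro y ⟨hyQR, hygap⟩
    rcases huniq y hygap with rfl | rfl
    · exact absurd (hsq2D.mp ((hQR _).mp hyQR).2) (not_not.mpr hD)
    · rfl
  · refine ⟨(2 : ZMod p) * D, ⟨(hQR _).mpr ⟨h2D0, hsq2D.mpr hD⟩, hgap2D⟩, ?_⟩
    rintro y ⟨hyQR, hygap⟩
    rcases huniq y hygap with rfl | rfl
    · rfl
    · exact absurd (hsqn2D.mp ((hQR _).mp hyQR).2) hD
end

section
/- Let p < q be odd primes with p, q ≡ 3 (mod 8) and (p-1) ∤ (q-1). Then Z/(pq)Z admits a strong Skolem starter. -/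
lemma sss_isSquare_nonsquare_mul {F : Type*} [Field F] [Fintype F] [DecidableEq F]
    {u a : F} (hu : ¬ IsSquare u) (ha : a ≠ 0) :
    IsSquare (u * a) ↔ ¬ IsSquare a := by
  have hu0 : u ≠ 0 := fun h => hu (h ▸ ⟨0, by simp⟩)
  have hcu : quadraticChar F u = -1 := quadraticChar_neg_one_iff_not_isSquare.mpr hu
  have hmul : quadraticChar F (u * a) = quadraticChar F u * quadraticChar F a := map_mul _ _ _
  constructor
  · intro h hsa
    have h1 : quadraticChar F (u * a) = 1 :=
      (quadraticChar_one_iff_isSquare (mul_ne_zero hu0 ha)).mpr h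
    have h2 : quadraticChar F a = 1 := (quadraticChar_one_iff_isSquare ha).mpr hsa
    rw [hmul, hcu, h2] at h1
    norm_num at h1
  · intro h
    have h2 : quadraticChar F a = -1 := quadraticChar_neg_one_iff_not_isSquare.mpr h
    have h1 : quadraticChar F (u * a) = 1 := by rw [hmul, hcu, h2]; norm_num
    exact (quadraticChar_one_iff_isSquare (mul_ne_zero hu0 ha)).mp h1

open Classical in
noncomputable def SSSGood (p q : ℕ) (z : ZMod (p * q)) : Prop :=
  if ZMod.castHom (dvd_mul_right p q) (ZMod p) z = 0 then
    IsSquare (ZMod.castHom (dvd_mul_left q p) (ZMod q) z)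
  else IsSquare (ZMod.castHom (dvd_mul_right p q) (ZMod p) z)

section main

variable (p q : ℕ) [hpf : Fact p.Prime] [hqf : Fact q.Prime]

local notation "φp" => ZMod.castHom (dvd_mul_right p q) (ZMod p)
local notation "φq" => ZMod.castHom (dvd_mul_left q p) (ZMod q)

lemma sss_zero (hcop : Nat.Coprime p q) (z : ZMod (p * q))
    (h1 : φp z = 0) (h2 : φq z = 0) : z = 0 := by
  haveI : NeZero (p * q) := ⟨Nat.mul_ne_zero hpf.out.pos.ne' hqf.out.pos.ne'⟩
  have e1 : ((z.val : ℕ) : ZMod p) = 0 := by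
    rw [ZMod.natCast_val, ← ZMod.castHom_apply (h := dvd_mul_right p q)]; exact h1
  have e2 : ((z.val : ℕ) : ZMod q) = 0 := by
    rw [ZMod.natCast_val, ← ZMod.castHom_apply (h := dvd_mul_left q p)]; exact h2
  have d1 : p ∣ z.val := (ZMod.natCast_eq_zero_iff _ _).mp e1
  have d2 : q ∣ z.val := (ZMod.natCast_eq_zero_iff _ _).mp e2
  have d : p * q ∣ z.val := Nat.Coprime.mul_dvd_of_dvd_of_dvd hcop d1 d2
  have : z.val = 0 := Nat.eq_zero_of_dvd_of_lt d (ZMod.val_lt z)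
  exact (ZMod.val_eq_zero z).mp this

lemma sss_flip (hcop : Nat.Coprime p q) (t z : ZMod (p * q))
    (htp : ¬ IsSquare (φp t)) (htq : ¬ IsSquare (φq t))
    (htp0 : φp t ≠ 0) (htq0 : φq t ≠ 0) (hz : z ≠ 0) :
    SSSGood p q (t * z) ↔ ¬ SSSGood p q z := by
  classical
  by_cases hzp : φp z = 0
  · have hzq : φq z ≠ 0 := fun h => hz (sss_zero p q hcop z hzp h)
    have h1 : φp (t * z) = 0 := by rw [map_mul, hzp, mul_zero]
    rw [SSSGood, SSSGood, if_pos h1, if_pos hzp, map_mul]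
    exact sss_isSquare_nonsquare_mul htq hzq
  · have h1 : φp (t * z) ≠ 0 := by rw [map_mul]; exact mul_ne_zero htp0 hzp
    rw [SSSGood, SSSGood, if_neg h1, if_neg hzp, map_mul]
    exact sss_isSquare_nonsquare_mul htp hzp

end main

/-- `ZMod n`, with `n = 2k+1` odd, admits a strong Skolem starter: there are pairs
`{x_i, x_i + i}` for `i = 1,…,k` (encoded by `x : Fin k → ZMod n`, the pair indexed by
`i : Fin k` being `{x i, x i + (i+1)}`) such that
* (Skolem) in each pair the larger residue minus the smaller one is exactly its index:
  `(x i + (i+1)).val = (x i).val + (i+1)`;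
* (starter) the `2k` elements of the pairs are pairwise distinct and nonzero, hence they
  partition the nonzero residues, and the differences `±(i+1)` cover all nonzero residues;
* (strong) the pair sums `x i + (x i + (i+1))` are nonzero and pairwise distinct. -/
def HasStrongSkolemStarter (n : ℕ) : Prop :=
  ∃ k : ℕ, n = 2 * k + 1 ∧ ∃ x : Fin k → ZMod n,
    (∀ i : Fin k, (x i + ((i : ℕ) + 1 : ℕ)).val = (x i).val + ((i : ℕ) + 1)) ∧
    Function.Injective (fun j : Fin k × Bool =>
      if j.2 then x j.1 + ((j.1 : ℕ) + 1 : ℕ) else x j.1) ∧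
    (∀ i : Fin k, x i ≠ 0) ∧
    (∀ i : Fin k, x i + ((i : ℕ) + 1 : ℕ) ≠ 0) ∧
    Function.Injective (fun i : Fin k => x i + (x i + ((i : ℕ) + 1 : ℕ))) ∧
    (∀ i : Fin k, x i + (x i + ((i : ℕ) + 1 : ℕ)) ≠ 0)

theorem zmod_pq_has_strong_skolem_starter (p q : ℕ) (hp : p.Prime) (hq : q.Prime)
    (hpq : p < q) (hp8 : p % 8 = 3) (hq8 : q % 8 = 3)
    (hndvd : ¬(p - 1) ∣ (q - 1)) :
    HasStrongSkolemStarter (p * q) := by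
  classical
  haveI : Fact p.Prime := ⟨hp⟩
  haveI : Fact q.Prime := ⟨hq⟩
  have hp2 : 2 ≤ p := hp.two_le
  have hq2 : 2 ≤ q := hq.two_le
  have hp3 : p ≠ 3 := by
    rintro rfl
    exact hndvd ⟨(q - 1) / 2, by omega⟩
  have hq3 : q ≠ 3 := by omega
  have hcop : Nat.Coprime p q := (Nat.coprime_primes hp hq).mpr (by omega)
  have hnpos : 0 < p * q := Nat.mul_pos (by omega) (by omega)
  have hpodd : p % 2 = 1 := by omega
  have hqodd : q % 2 = 1 := by omega
  have hnodd : (p * q) % 2 = 1 := by rw [Nat.mul_mod, hpodd, hqodd]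
  haveI : NeZero (p * q) := ⟨by omega⟩
  obtain ⟨k, hk⟩ : ∃ k, p * q = 2 * k + 1 := ⟨(p * q - 1) / 2, by omega⟩
  -- the two cast homs
  set φp : ZMod (p * q) →+* ZMod p := ZMod.castHom (dvd_mul_right p q) (ZMod p) with hφp
  set φq : ZMod (p * q) →+* ZMod q := ZMod.castHom (dvd_mul_left q p) (ZMod q) with hφq
  -- nonsquare facts
  have hm1p : ¬ IsSquare (-1 : ZMod p) := by
    rw [ZMod.exists_sq_eq_neg_one_iff]; omega
  have hm1q : ¬ IsSquare (-1 : ZMod q) := by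
    rw [ZMod.exists_sq_eq_neg_one_iff]; omega
  have h2p : ¬ IsSquare (2 : ZMod p) := by
    rw [ZMod.exists_sq_eq_two_iff (by omega : p ≠ 2)]; omega
  have h2q : ¬ IsSquare (2 : ZMod q) := by
    rw [ZMod.exists_sq_eq_two_iff (by omega : q ≠ 2)]; omega
  have h2p0 : (2 : ZMod p) ≠ 0 := by
    have : ((2 : ℕ) : ZMod p) ≠ 0 := by
      rw [Ne, ZMod.natCast_eq_zero_iff]
      intro h; have := Nat.le_of_dvd (by norm_num) h; omega
    simpa using this
  have h2q0 : (2 : ZMod q) ≠ 0 := by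
    have : ((2 : ℕ) : ZMod q) ≠ 0 := by
      rw [Ne, ZMod.natCast_eq_zero_iff]
      intro h; have := Nat.le_of_dvd (by norm_num) h; omega
    simpa using this
  have ep1 : φp (-1 : ZMod (p * q)) = -1 := by rw [map_neg, map_one]
  have eq1 : φq (-1 : ZMod (p * q)) = -1 := by rw [map_neg, map_one]
  have ep2 : φp (2 : ZMod (p * q)) = 2 := map_ofNat _ 2
  have eq2 : φq (2 : ZMod (p * q)) = 2 := map_ofNat _ 2
  have hflipneg : ∀ z : ZMod (p * q), z ≠ 0 → (SSSGood p q (-z) ↔ ¬ SSSGood p q z) := by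
    intro z hz
    have := sss_flip p q hcop (-1) z (by rw [← hφp, ep1]; exact hm1p)
      (by rw [← hφq, eq1]; exact hm1q)
      (by rw [← hφp, ep1]; exact neg_ne_zero.mpr one_ne_zero)
      (by rw [← hφq, eq1]; exact neg_ne_zero.mpr one_ne_zero) hz
    rwa [neg_one_mul] at this
  have hflip2 : ∀ z : ZMod (p * q), z ≠ 0 → (SSSGood p q (2 * z) ↔ ¬ SSSGood p q z) := by
    intro z hz
    exact sss_flip p q hcop 2 z (by rw [← hφp, ep2]; exact h2p)
      (by rw [← hφq, eq2]; exact h2q)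
      (by rw [← hφp, ep2]; exact h2p0) (by rw [← hφq, eq2]; exact h2q0) hz
  -- units
  have hu2 : IsUnit (2 : ZMod (p * q)) := by
    have : IsUnit ((2 : ℕ) : ZMod (p * q)) := by
      rw [ZMod.isUnit_iff_coprime]
      exact Nat.prime_two.coprime_iff_not_dvd.mpr (by omega)
    simpa using this
  have hu3 : IsUnit (3 : ZMod (p * q)) := by
    have : IsUnit ((3 : ℕ) : ZMod (p * q)) := by
      rw [ZMod.isUnit_iff_coprime]
      apply Nat.Coprime.mul_right
      · exact (Nat.coprime_primes Nat.prime_three hp).mpr (by omega)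
      · exact (Nat.coprime_primes Nat.prime_three hq).mpr (by omega)
    simpa using this
  -- abbreviation facts for the index casts
  have hcval : ∀ i : Fin k, ((((i : ℕ) + 1 : ℕ)) : ZMod (p * q)).val = (i : ℕ) + 1 := by
    intro i; exact ZMod.val_cast_of_lt (by have := i.isLt; omega)
  have hc0 : ∀ i : Fin k, ((((i : ℕ) + 1 : ℕ)) : ZMod (p * q)) ≠ 0 := by
    intro i h
    have := hcval i
    rw [h, ZMod.val_zero] at this
    omega
  have hc2val : ∀ i : Fin k,
      (2 * ((((i : ℕ) + 1 : ℕ)) : ZMod (p * q))).val = 2 * ((i : ℕ) + 1) := by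
    intro i
    have e : (2 * ((((i : ℕ) + 1 : ℕ)) : ZMod (p * q)))
        = ((2 * ((i : ℕ) + 1) : ℕ) : ZMod (p * q)) := by push_cast; ring
    rw [e]; exact ZMod.val_cast_of_lt (by have := i.isLt; omega)
  have hc20 : ∀ i : Fin k, 2 * ((((i : ℕ) + 1 : ℕ)) : ZMod (p * q)) ≠ 0 := by
    intro i h
    have := hc2val i; rw [h, ZMod.val_zero] at this; omega
  -- the construction
  set y : Fin k → ZMod (p * q) := fun i =>
    if SSSGood p q ((((i : ℕ) + 1 : ℕ)) : ZMod (p * q)) then ((((i : ℕ) + 1 : ℕ)) : ZMod (p * q))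
    else -((((i : ℕ) + 1 : ℕ)) : ZMod (p * q)) with hy
  set x : Fin k → ZMod (p * q) := fun i =>
    if SSSGood p q ((((i : ℕ) + 1 : ℕ)) : ZMod (p * q)) then ((((i : ℕ) + 1 : ℕ)) : ZMod (p * q))
    else -(2 * ((((i : ℕ) + 1 : ℕ)) : ZMod (p * q))) with hx
  have hyg : ∀ i, SSSGood p q (y i) := by
    intro i
    by_cases h : SSSGood p q ((((i : ℕ) + 1 : ℕ)) : ZMod (p * q))
    · rw [hy]; simp only [if_pos h]; exact h
    · rw [hy]; simp only [if_neg h]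
      exact (hflipneg _ (hc0 i)).mpr h
  have hy0 : ∀ i, y i ≠ 0 := by
    intro i
    rw [hy]; dsimp only
    split
    · exact hc0 i
    · exact neg_ne_zero.mpr (hc0 i)
  have h2yg : ∀ i, ¬ SSSGood p q (2 * y i) := by
    intro i h
    exact ((hflip2 (y i) (hy0 i)).mp h) (hyg i)
  have h2y0 : ∀ i, 2 * y i ≠ 0 := fun i h => hy0 i ((hu2.mul_right_eq_zero).mp h)
  have hyne2y : ∀ a b : Fin k, y a ≠ 2 * y b := fun a b h => h2yg b (h ▸ hyg a)
  have hyval : ∀ i : Fin k, (y i).val = (i : ℕ) + 1 ∨ (y i).val = p * q - ((i : ℕ) + 1) := by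
    intro i
    rw [hy]; dsimp only
    split
    · left; exact hcval i
    · right; rw [ZMod.neg_val, if_neg (hc0 i), hcval]
  have hyinj : Function.Injective y := by
    intro a b h
    have hv := congrArg ZMod.val h
    have ha := a.isLt; have hb := b.isLt
    rcases hyval a with h1 | h1 <;> rcases hyval b with h2 | h2 <;>
      rw [h1, h2] at hv <;> exact Fin.ext (by omega)
  have hxy : ∀ i : Fin k,
      (x i = y i ∧ x i + ((((i : ℕ) + 1 : ℕ)) : ZMod (p * q)) = 2 * y i)
      ∨ (x i = 2 * y i ∧ x i + ((((i : ℕ) + 1 : ℕ)) : ZMod (p * q)) = y i) := by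
    intro i
    by_cases h : SSSGood p q ((((i : ℕ) + 1 : ℕ)) : ZMod (p * q))
    · left
      constructor
      · rw [hx, hy]; simp only [if_pos h]
      · rw [hx, hy]; simp only [if_pos h]; exact (two_mul _).symm
    · right
      constructor
      · rw [hx, hy]; simp only [if_neg h]; ring
      · rw [hx, hy]; simp only [if_neg h]; ring
  refine ⟨k, hk, x, ?_, ?_, ?_, ?_, ?_, ?_⟩
  · -- Skolem property
    intro i
    by_cases h : SSSGood p q ((((i : ℕ) + 1 : ℕ)) : ZMod (p * q))
    · have hxi : x i = ((((i : ℕ) + 1 : ℕ)) : ZMod (p * q)) := by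
        rw [hx]; simp only [if_pos h]
      rw [hxi, hcval]
      have e : ((((i : ℕ) + 1 : ℕ)) : ZMod (p * q)) + ((((i : ℕ) + 1 : ℕ)) : ZMod (p * q))
          = (((((i : ℕ) + 1) + ((i : ℕ) + 1) : ℕ)) : ZMod (p * q)) := by push_cast; ring
      rw [e, ZMod.val_cast_of_lt (by have := i.isLt; omega)]
    · have hxi : x i = -(2 * ((((i : ℕ) + 1 : ℕ)) : ZMod (p * q))) := by
        rw [hx]; simp only [if_neg h]
      rw [hxi]
      have e : -(2 * ((((i : ℕ) + 1 : ℕ)) : ZMod (p * q))) + ((((i : ℕ) + 1 : ℕ)) : ZMod (p * q))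
          = -((((i : ℕ) + 1 : ℕ)) : ZMod (p * q)) := by ring
      rw [e, ZMod.neg_val, ZMod.neg_val, if_neg (hc0 i), if_neg (hc20 i), hcval, hc2val]
      have := i.isLt; omega
  · -- injectivity of the pair elements
    intro j1 j2 h
    obtain ⟨i1, b1⟩ := j1
    obtain ⟨i2, b2⟩ := j2
    dsimp only at h
    cases b1 <;> cases b2
    · rw [if_neg Bool.false_ne_true, if_neg Bool.false_ne_true] at h
      rcases hxy i1 with ⟨ha1, hb1⟩ | ⟨ha1, hb1⟩ <;> rcases hxy i2 with ⟨ha2, hb2⟩ | ⟨ha2, hb2⟩ <;>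
          rw [ha1, ha2] at h
      · rw [hyinj h]
      · exact absurd h (hyne2y i1 i2)
      · exact absurd h.symm (hyne2y i2 i1)
      · rw [hyinj (hu2.mul_left_cancel h)]
    · rw [if_neg Bool.false_ne_true, if_pos rfl] at h
      rcases hxy i1 with ⟨ha1, hb1⟩ | ⟨ha1, hb1⟩ <;> rcases hxy i2 with ⟨ha2, hb2⟩ | ⟨ha2, hb2⟩ <;>
          rw [ha1, hb2] at h
      · exact absurd h (hyne2y i1 i2)
      · obtain rfl : i1 = i2 := hyinj h
        exact absurd (ha1.symm.trans ha2) (hyne2y i1 i1)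
      · obtain rfl : i1 = i2 := hyinj (hu2.mul_left_cancel h)
        exact absurd (ha2.symm.trans ha1) (hyne2y i1 i1)
      · exact absurd h.symm (hyne2y i2 i1)
    · rw [if_pos rfl, if_neg Bool.false_ne_true] at h
      rcases hxy i1 with ⟨ha1, hb1⟩ | ⟨ha1, hb1⟩ <;> rcases hxy i2 with ⟨ha2, hb2⟩ | ⟨ha2, hb2⟩ <;>
          rw [hb1, ha2] at h
      · exact absurd h.symm (hyne2y i2 i1)
      · obtain rfl : i1 = i2 := hyinj (hu2.mul_left_cancel h)
        exact absurd (ha1.symm.trans ha2) (hyne2y i1 i1)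
      · obtain rfl : i1 = i2 := hyinj h
        exact absurd (ha2.symm.trans ha1) (hyne2y i1 i1)
      · exact absurd h (hyne2y i1 i2)
    · rw [if_pos rfl, if_pos rfl] at h
      rcases hxy i1 with ⟨ha1, hb1⟩ | ⟨ha1, hb1⟩ <;> rcases hxy i2 with ⟨ha2, hb2⟩ | ⟨ha2, hb2⟩ <;>
          rw [hb1, hb2] at h
      · rw [hyinj (hu2.mul_left_cancel h)]
      · exact absurd h.symm (hyne2y i2 i1)
      · exact absurd h (hyne2y i1 i2)
      · rw [hyinj h]
  · -- nonzero first elements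
    intro i
    rcases hxy i with ⟨h1, _⟩ | ⟨h1, _⟩ <;> rw [h1]
    · exact hy0 i
    · exact h2y0 i
  · -- nonzero second elements
    intro i
    rcases hxy i with ⟨_, h2⟩ | ⟨_, h2⟩ <;> rw [h2]
    · exact h2y0 i
    · exact hy0 i
  · -- injectivity of sums
    have hsum : ∀ i : Fin k,
        x i + (x i + ((((i : ℕ) + 1 : ℕ)) : ZMod (p * q))) = 3 * y i := by
      intro i
      rcases hxy i with ⟨h1, h2⟩ | ⟨h1, h2⟩ <;> rw [h2, h1] <;> ring
    intro a b h
    dsimp only at h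
    rw [hsum a, hsum b] at h
    exact hyinj (hu3.mul_left_cancel h)
  · -- nonzero sums
    have hsum : ∀ i : Fin k,
        x i + (x i + ((((i : ℕ) + 1 : ℕ)) : ZMod (p * q))) = 3 * y i := by
      intro i
      rcases hxy i with ⟨h1, h2⟩ | ⟨h1, h2⟩ <;> rw [h2, h1] <;> ring
    intro i h
    rw [hsum i] at h
    exact hy0 i ((hu3.mul_right_eq_zero).mp h)
end
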